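/- Let a,d be weakly or strongly degenerate at 0 with degeneracy constants K_a, K_d, let b ∈ C⁰[0,1] with b/a ∈ L¹(0,1), and let η(x) = exp(∫_{1/2}^x b(s)/a(s) ds) and σ = a/η. Then the best constant C_HP in the Hardy–Poincaré inequality ∫₀¹ u²/(σ d) dx ≤ C_HP ∫₀¹ η (u')² dx (for u ∈ H¹ with weighted integrability and u(0)=u(1)=0) satisfies C_HP ≤ 4·max_{[0,1]} η / (a(1) d(1) min_{[0,1]} η), provided K_a + K_d ≤ 2. -/

import Mathlib

open Set MeasureTheory

/-- A function `g` is weakly or strongly degenerate at `0` with degeneracy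
constant `K`: continuous on `[0,1]`, `C¹` on `(0,1]`, `g 0 = 0`, `g > 0`
on `(0,1]`, and `sup_{(0,1]} x |g'| / g = K ∈ (0,2)`. -/
def IsDegen (g : ℝ → ℝ) (K : ℝ) : Prop :=
  ContinuousOn g (Set.Icc 0 1) ∧ g 0 = 0 ∧
  (∀ x ∈ Set.Ioc (0:ℝ) 1, 0 < g x) ∧
  (∀ x ∈ Set.Ioc (0:ℝ) 1, DifferentiableAt ℝ g x) ∧
  IsLUB {r : ℝ | ∃ x ∈ Set.Ioc (0:ℝ) 1, r = x * |deriv g x| / g x} K ∧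
  0 < K ∧ K < 2

open intervalIntegral Function
open scoped ENNReal

/-- Lower bound `g x ≥ g 1 * x ^ K` for degenerate functions. -/
lemma HP_degen_lower (g : ℝ → ℝ) (K : ℝ) (hdeg : IsDegen g K) :
    ∀ x ∈ Set.Ioc (0:ℝ) 1, g 1 * x ^ K ≤ g x := by
  obtain ⟨hc, h0, hpos, hdiff, hlub, hK0, hK2⟩ := hdeg
  have hub : ∀ y ∈ Ioc (0:ℝ) 1, |deriv g y| * y ≤ K * g y := by
    intro y hy
    have h1 : y * |deriv g y| / g y ≤ K := hlub.1 ⟨y, hy, rfl⟩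
    rw [div_le_iff₀ (hpos y hy)] at h1
    linarith [h1]
  intro x hx
  set f : ℝ → ℝ := fun y => g y * y ^ (-K) with hf
  have hanti : AntitoneOn f (Icc x 1) := by
    apply antitoneOn_of_deriv_nonpos (convex_Icc x 1)
    · apply ContinuousOn.mul (hc.mono (Icc_subset_Icc hx.1.le le_rfl))
      apply ContinuousOn.rpow_const continuousOn_id
      intro y hy
      exact Or.inl (ne_of_gt (lt_of_lt_of_le hx.1 hy.1))
    · rw [interior_Icc]
      intro y hy
      have hy0 : 0 < y := hx.1.trans hy.1
      exact ((hdiff y ⟨hy0, hy.2.le⟩).hasDerivAt.mul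
        (Real.hasDerivAt_rpow_const (Or.inl hy0.ne'))).differentiableAt.differentiableWithinAt
    · rw [interior_Icc]
      intro y hy
      have hy0 : 0 < y := hx.1.trans hy.1
      have hder : HasDerivAt f (deriv g y * y ^ (-K) + g y * (-K * y ^ (-K - 1))) y :=
        (hdiff y ⟨hy0, hy.2.le⟩).hasDerivAt.mul
          (Real.hasDerivAt_rpow_const (Or.inl hy0.ne'))
      rw [hder.deriv]
      have hub' := hub y ⟨hy0, hy.2.le⟩
      have hgp := hpos y ⟨hy0, hy.2.le⟩
      have hp : (0:ℝ) < y ^ (-K) := Real.rpow_pos_of_pos hy0 _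
      have hsub : y ^ (-K - 1) = y ^ (-K) / y := Real.rpow_sub_one hy0.ne' _
      rw [hsub]
      have h1 : deriv g y * y ^ (-K) ≤ |deriv g y| * y ^ (-K) :=
        mul_le_mul_of_nonneg_right (le_abs_self _) hp.le
      have h2 : |deriv g y| * y ^ (-K) ≤ K * g y * (y ^ (-K) / y) := by
        have hmul := mul_le_mul_of_nonneg_right hub'
          (show (0:ℝ) ≤ y ^ (-K) * y⁻¹ by positivity)
        calc |deriv g y| * y ^ (-K) = |deriv g y| * y * (y ^ (-K) * y⁻¹) := by
              field_simp
        _ ≤ K * g y * (y ^ (-K) * y⁻¹) := hmul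
        _ = K * g y * (y ^ (-K) / y) := by rw [div_eq_mul_inv]
      nlinarith [h1, h2]
  have h1m : (1:ℝ) ∈ Icc x 1 := ⟨hx.2, le_rfl⟩
  have hxm : x ∈ Icc x 1 := ⟨le_rfl, hx.2⟩
  have hle := hanti hxm h1m hx.2
  rw [hf] at hle
  simp only [Real.one_rpow, mul_one] at hle
  have hxK : (0:ℝ) < x ^ K := Real.rpow_pos_of_pos hx.1 _
  have hcancel : x ^ (-K) * x ^ K = 1 := by
    rw [← Real.rpow_add hx.1]; norm_num
  calc g 1 * x ^ K ≤ (g x * x ^ (-K)) * x ^ K := mul_le_mul_of_nonneg_right hle hxK.le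
  _ = g x := by rw [mul_assoc, hcancel, mul_one]

lemma HP_rpow_lint (x : ℝ) (hx0 : 0 < x) :
    ∫⁻ t in Ioo (0:ℝ) x, ENNReal.ofReal (t ^ (-(1/2) : ℝ)) = ENNReal.ofReal (2 * Real.sqrt x) := by
  have hint : IntegrableOn (fun t : ℝ => t ^ (-(1/2) : ℝ)) (Ioo 0 x) := by
    rw [← integrableOn_Ioc_iff_integrableOn_Ioo]
    have := intervalIntegrable_rpow' (a := 0) (b := x) (by norm_num : (-1:ℝ) < -(1/2))
    rwa [intervalIntegrable_iff_integrableOn_Ioc_of_le hx0.le] at this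
  rw [← ofReal_integral_eq_lintegral_ofReal hint
    ((ae_restrict_iff' measurableSet_Ioo).2 (ae_of_all _ fun t ht => Real.rpow_nonneg ht.1.le _))]
  congr 1
  rw [← integral_Ioc_eq_integral_Ioo, ← intervalIntegral.integral_of_le hx0.le,
    integral_rpow (Or.inl (by norm_num))]
  rw [Real.zero_rpow (by norm_num), Real.sqrt_eq_rpow]
  norm_num; ring

/-- The Cauchy–Schwarz step in the proof of Hardy's inequality. -/
lemma HP_hardy_CS (u G : ℝ → ℝ) (hGm : Measurable G)
    (hu : ContinuousOn u (Icc 0 1)) (hu0 : u 0 = 0)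
    (hd : ∀ x ∈ Ioo (0:ℝ) 1, HasDerivAt u (G x) x)
    (hG2 : IntegrableOn (fun t => G t ^ 2) (Ioo 0 1))
    (x : ℝ) (hx : x ∈ Ioo (0:ℝ) 1) :
    ENNReal.ofReal (u x ^ 2) ≤ ENNReal.ofReal (2 * Real.sqrt x) *
      ∫⁻ t in Ioo (0:ℝ) x, ENNReal.ofReal (Real.sqrt t * G t ^ 2) := by
  obtain ⟨hx0, hx1⟩ := hx
  have hGabs : IntegrableOn (fun t => |G t|) (Ioo (0:ℝ) 1) := by
    refine Integrable.mono' (g := fun t => 1 + G t ^ 2)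
      ((integrable_const 1).add hG2) (hGm.abs.aestronglyMeasurable) ?_
    filter_upwards with t
    rw [Real.norm_eq_abs, abs_abs]
    nlinarith [sq_nonneg (|G t| - 1), sq_abs (G t)]
  have hGabsx : IntegrableOn (fun t => |G t|) (Ioo (0:ℝ) x) :=
    hGabs.mono_set (Ioo_subset_Ioo le_rfl hx1.le)
  have hGx : IntegrableOn G (Ioo (0:ℝ) x) := by
    refine Integrable.mono' hGabsx hGm.aestronglyMeasurable ?_
    filter_upwards with t; rw [Real.norm_eq_abs]
  have hftc : ∫ t in (0:ℝ)..x, G t = u x - u 0 := by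
    refine integral_eq_sub_of_hasDeriv_right_of_le hx0.le
      (hu.mono (Icc_subset_Icc le_rfl hx1.le)) ?_ ?_
    · intro y hy
      exact (hd y ⟨hy.1, hy.2.trans hx1⟩).hasDerivWithinAt
    · rw [intervalIntegrable_iff_integrableOn_Ioc_of_le hx0.le,
        integrableOn_Ioc_iff_integrableOn_Ioo]
      exact hGx
  set A : ℝ := ∫ t in Ioo (0:ℝ) x, |G t| with hA
  have hux : |u x| ≤ A := by
    rw [hA, ← integral_Ioc_eq_integral_Ioo, ← intervalIntegral.integral_of_le hx0.le]
    calc |u x| = |∫ t in (0:ℝ)..x, G t| := by rw [hftc, hu0, sub_zero]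
    _ ≤ ∫ t in (0:ℝ)..x, |G t| := abs_integral_le_integral_abs hx0.le
  have hAnn : 0 ≤ A := integral_nonneg fun t => abs_nonneg _
  have hAlint : ENNReal.ofReal A = ∫⁻ t in Ioo (0:ℝ) x, ENNReal.ofReal |G t| :=
    ofReal_integral_eq_lintegral_ofReal hGabsx (ae_of_all _ fun t => abs_nonneg _)
  set f : ℝ → ℝ≥0∞ := fun t => ENNReal.ofReal (t ^ (-(1/4) : ℝ)) with hf
  set g : ℝ → ℝ≥0∞ := fun t => ENNReal.ofReal (t ^ ((1/4) : ℝ) * |G t|) with hg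
  have hfm : Measurable f := (measurable_id.pow_const _).ennreal_ofReal
  have hgm : Measurable g := ((measurable_id.pow_const _).mul hGm.abs).ennreal_ofReal
  have hsplit : ∫⁻ t in Ioo (0:ℝ) x, ENNReal.ofReal |G t|
      = ∫⁻ t in Ioo (0:ℝ) x, (f * g) t := by
    refine setLIntegral_congr_fun measurableSet_Ioo (fun t ht => ?_)
    simp only [Pi.mul_apply, hf, hg]
    rw [← ENNReal.ofReal_mul (Real.rpow_nonneg ht.1.le _), ← mul_assoc,
      ← Real.rpow_add ht.1, (by norm_num : -(1/4) + (1/4 : ℝ) = 0), Real.rpow_zero, one_mul]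
  have hconj : Real.HolderConjugate 2 2 := Real.HolderConjugate.two_two
  have hH := ENNReal.lintegral_mul_le_Lp_mul_Lq (volume.restrict (Ioo (0:ℝ) x)) hconj
    hfm.aemeasurable hgm.aemeasurable
  have hfac1 : ∫⁻ t in Ioo (0:ℝ) x, f t ^ (2:ℝ) = ENNReal.ofReal (2 * Real.sqrt x) := by
    rw [← HP_rpow_lint x hx0]
    refine setLIntegral_congr_fun measurableSet_Ioo (fun t ht => ?_)
    rw [hf, ENNReal.ofReal_rpow_of_nonneg (Real.rpow_nonneg ht.1.le _) (by norm_num),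
      ← Real.rpow_mul ht.1.le]
    norm_num
  have hfac2 : ∫⁻ t in Ioo (0:ℝ) x, g t ^ (2:ℝ)
      = ∫⁻ t in Ioo (0:ℝ) x, ENNReal.ofReal (Real.sqrt t * G t ^ 2) := by
    refine setLIntegral_congr_fun measurableSet_Ioo (fun t ht => ?_)
    rw [hg, ENNReal.ofReal_rpow_of_nonneg
        (mul_nonneg (Real.rpow_nonneg ht.1.le _) (abs_nonneg _)) (by norm_num)]
    congr 1
    rw [Real.mul_rpow (Real.rpow_nonneg ht.1.le _) (abs_nonneg _)]
    have h1 : (t ^ ((1/4):ℝ)) ^ (2:ℝ) = Real.sqrt t := by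
      rw [← Real.rpow_mul ht.1.le, Real.sqrt_eq_rpow]; norm_num
    have h2 : |G t| ^ (2:ℝ) = G t ^ 2 := by
      rw [show (2:ℝ) = ((2:ℕ):ℝ) by norm_num, Real.rpow_natCast, sq_abs]
    rw [h1, h2]
  set B : ℝ≥0∞ := ∫⁻ t in Ioo (0:ℝ) x, ENNReal.ofReal (Real.sqrt t * G t ^ 2) with hB
  set c : ℝ≥0∞ := ENNReal.ofReal (2 * Real.sqrt x) with hc
  have hH' : ENNReal.ofReal A ≤ c ^ (1/2:ℝ) * B ^ (1/2:ℝ) := by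
    rw [hAlint, hsplit]
    calc ∫⁻ t in Ioo (0:ℝ) x, (f * g) t
        ≤ (∫⁻ t in Ioo (0:ℝ) x, f t ^ (2:ℝ)) ^ (1/(2:ℝ)) *
          (∫⁻ t in Ioo (0:ℝ) x, g t ^ (2:ℝ)) ^ (1/(2:ℝ)) := hH
    _ = c ^ (1/2:ℝ) * B ^ (1/2:ℝ) := by rw [hfac1, hfac2]
  calc ENNReal.ofReal (u x ^ 2) ≤ ENNReal.ofReal (A ^ 2) := by
        apply ENNReal.ofReal_le_ofReal
        rw [← sq_abs (u x)]
        exact pow_le_pow_left₀ (abs_nonneg _) hux 2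
  _ = ENNReal.ofReal A * ENNReal.ofReal A := by
        rw [sq, ENNReal.ofReal_mul hAnn]
  _ ≤ (c ^ (1/2:ℝ) * B ^ (1/2:ℝ)) * (c ^ (1/2:ℝ) * B ^ (1/2:ℝ)) := mul_le_mul' hH' hH'
  _ = (c ^ (1/2:ℝ) * c ^ (1/2:ℝ)) * (B ^ (1/2:ℝ) * B ^ (1/2:ℝ)) := by ring
  _ = c * B := by
        rw [← ENNReal.rpow_add_of_nonneg _ _ (by norm_num) (by norm_num),
          ← ENNReal.rpow_add_of_nonneg _ _ (by norm_num) (by norm_num)]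
        norm_num

noncomputable def HPFker (G : ℝ → ℝ) : ℝ × ℝ → ℝ≥0∞ := fun p =>
  ({q : ℝ × ℝ | q.2 < q.1}.indicator (fun _ => (1:ℝ≥0∞)) p) *
    (ENNReal.ofReal (2 * p.1 ^ (-(3/2) : ℝ)) * ENNReal.ofReal (Real.sqrt p.2 * G p.2 ^ 2))

lemma HPFker_meas (G : ℝ → ℝ) (hGm : Measurable G) : Measurable (HPFker G) := by
  apply Measurable.mul
  · exact measurable_const.indicator (measurableSet_lt measurable_snd measurable_fst)
  · exact (((measurable_fst.pow_const _).const_mul 2).ennreal_ofReal).mul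
      ((measurable_snd.sqrt.mul ((hGm.comp measurable_snd).pow_const 2)).ennreal_ofReal)

lemma HPFker_slice_x (G : ℝ → ℝ) (x : ℝ) (hx : x ∈ Ioo (0:ℝ) 1) :
    ∫⁻ t in Ioo (0:ℝ) 1, HPFker G (x, t) =
      ENNReal.ofReal (2 * x ^ (-(3/2) : ℝ)) *
        ∫⁻ t in Ioo (0:ℝ) x, ENNReal.ofReal (Real.sqrt t * G t ^ 2) := by
  have hfun : (fun t => HPFker G (x, t)) =
      (Iio x).indicator (fun t => ENNReal.ofReal (2 * x ^ (-(3/2) : ℝ)) *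
        ENNReal.ofReal (Real.sqrt t * G t ^ 2)) := by
    funext t
    by_cases h : t < x
    · simp [HPFker, Set.indicator_of_mem, h, Set.mem_Iio.mpr h, Set.indicator]
    · simp [HPFker, Set.indicator, h]
  rw [hfun, lintegral_indicator measurableSet_Iio, Measure.restrict_restrict measurableSet_Iio]
  have heq : Iio x ∩ Ioo 0 1 = Ioo 0 x := by
    ext t; simp only [mem_inter_iff, mem_Iio, mem_Ioo]
    exact ⟨fun h => ⟨h.2.1, h.1⟩, fun h => ⟨h.2, h.1, h.2.trans hx.2⟩⟩
  rw [heq, lintegral_const_mul' _ _ ENNReal.ofReal_ne_top]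

lemma HPFker_slice_t (G : ℝ → ℝ) (t : ℝ) (ht : t ∈ Ioo (0:ℝ) 1) :
    ∫⁻ x in Ioo (0:ℝ) 1, HPFker G (x, t) =
      ENNReal.ofReal (Real.sqrt t * G t ^ 2) *
        ∫⁻ x in Ioo t 1, ENNReal.ofReal (2 * x ^ (-(3/2) : ℝ)) := by
  have hfun : (fun x => HPFker G (x, t)) =
      (Ioi t).indicator (fun x => ENNReal.ofReal (Real.sqrt t * G t ^ 2) *
        ENNReal.ofReal (2 * x ^ (-(3/2) : ℝ))) := by
    funext x
    by_cases h : t < x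
    · simp only [HPFker, Set.indicator, mem_setOf_eq, h, if_true, mem_Ioi, one_mul]
      ring
    · simp [HPFker, Set.indicator, h, mem_Ioi]
  rw [hfun, lintegral_indicator measurableSet_Ioi, Measure.restrict_restrict measurableSet_Ioi]
  have heq : Ioi t ∩ Ioo 0 1 = Ioo t 1 := by
    ext x; simp only [mem_inter_iff, mem_Ioi, mem_Ioo]
    exact ⟨fun h => ⟨h.1, h.2.2⟩, fun h => ⟨h.1, ht.1.trans h.1, h.2⟩⟩
  rw [heq, lintegral_const_mul' _ _ ENNReal.ofReal_ne_top]

lemma HP_rpow_tail (t : ℝ) (ht : t ∈ Ioo (0:ℝ) 1) :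
    ∫⁻ x in Ioo t 1, ENNReal.ofReal (2 * x ^ (-(3/2) : ℝ))
      ≤ ENNReal.ofReal (4 * t ^ (-(1/2) : ℝ)) := by
  have h0 : (0:ℝ) ∉ Set.uIcc t 1 := by
    rw [Set.uIcc_of_le ht.2.le]
    intro h; exact absurd h.1 (not_le.mpr ht.1)
  have hint : IntegrableOn (fun x : ℝ => 2 * x ^ (-(3/2) : ℝ)) (Ioo t 1) := by
    rw [← integrableOn_Ioc_iff_integrableOn_Ioo]
    have := (intervalIntegrable_rpow (μ := volume) (a := t) (b := 1)
      (r := (-(3/2):ℝ)) (Or.inr h0)).const_mul 2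
    rwa [intervalIntegrable_iff_integrableOn_Ioc_of_le ht.2.le] at this
  rw [← ofReal_integral_eq_lintegral_ofReal hint
    ((ae_restrict_iff' measurableSet_Ioo).2 (ae_of_all _ fun x hx =>
      mul_nonneg (by norm_num) (Real.rpow_nonneg (ht.1.trans hx.1).le _)))]
  apply ENNReal.ofReal_le_ofReal
  rw [← integral_Ioc_eq_integral_Ioo, ← intervalIntegral.integral_of_le ht.2.le,
    intervalIntegral.integral_const_mul, integral_rpow (Or.inr ⟨by norm_num, h0⟩)]
  rw [Real.one_rpow]
  have h1 : (0:ℝ) < t ^ (-(1/2) : ℝ) := Real.rpow_pos_of_pos ht.1 _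
  norm_num
  linarith

/-- Hardy's inequality, in Lebesgue-integral form. -/
lemma HP_hardy_lintegral (u G : ℝ → ℝ) (hGm : Measurable G)
    (hu : ContinuousOn u (Icc 0 1)) (hu0 : u 0 = 0)
    (hd : ∀ x ∈ Ioo (0:ℝ) 1, HasDerivAt u (G x) x)
    (hG2 : IntegrableOn (fun t => G t ^ 2) (Ioo 0 1)) :
    ∫⁻ x in Ioo (0:ℝ) 1, ENNReal.ofReal (u x ^ 2 / x ^ 2) ≤
      4 * ∫⁻ t in Ioo (0:ℝ) 1, ENNReal.ofReal (G t ^ 2) := by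
  calc ∫⁻ x in Ioo (0:ℝ) 1, ENNReal.ofReal (u x ^ 2 / x ^ 2)
      ≤ ∫⁻ x in Ioo (0:ℝ) 1, ∫⁻ t in Ioo (0:ℝ) 1, HPFker G (x, t) := by
        refine setLIntegral_mono' measurableSet_Ioo fun x hx => ?_
        rw [HPFker_slice_x G x hx]
        have hCS := HP_hardy_CS u G hGm hu hu0 hd hG2 x hx
        have harith : (x ^ 2)⁻¹ * (2 * Real.sqrt x) = 2 * x ^ (-(3/2) : ℝ) := by
          rw [Real.sqrt_eq_rpow, ← Real.rpow_natCast x 2, ← Real.rpow_neg hx.1.le,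
            show ((2:ℕ):ℝ) = (2:ℝ) by norm_num]
          rw [mul_comm ((x:ℝ) ^ (-(2:ℝ))) _, mul_assoc, ← Real.rpow_add hx.1]
          norm_num
        calc ENNReal.ofReal (u x ^ 2 / x ^ 2)
            = ENNReal.ofReal ((x ^ 2)⁻¹) * ENNReal.ofReal (u x ^ 2) := by
              rw [← ENNReal.ofReal_mul (inv_nonneg.mpr (sq_nonneg x)), inv_mul_eq_div]
        _ ≤ ENNReal.ofReal ((x ^ 2)⁻¹) * (ENNReal.ofReal (2 * Real.sqrt x) *
              ∫⁻ t in Ioo (0:ℝ) x, ENNReal.ofReal (Real.sqrt t * G t ^ 2)) :=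
              mul_le_mul_right hCS _
        _ = ENNReal.ofReal (2 * x ^ (-(3/2) : ℝ)) *
              ∫⁻ t in Ioo (0:ℝ) x, ENNReal.ofReal (Real.sqrt t * G t ^ 2) := by
              rw [← mul_assoc, ← ENNReal.ofReal_mul (inv_nonneg.mpr (sq_nonneg x)), harith]
  _ = ∫⁻ t in Ioo (0:ℝ) 1, ∫⁻ x in Ioo (0:ℝ) 1, HPFker G (x, t) :=
        lintegral_lintegral_swap (HPFker_meas G hGm).aemeasurable
  _ ≤ ∫⁻ t in Ioo (0:ℝ) 1, ENNReal.ofReal (4 * G t ^ 2) := by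
        refine setLIntegral_mono' measurableSet_Ioo fun t ht => ?_
        rw [HPFker_slice_t G t ht]
        calc ENNReal.ofReal (Real.sqrt t * G t ^ 2) *
              ∫⁻ x in Ioo t 1, ENNReal.ofReal (2 * x ^ (-(3/2) : ℝ))
            ≤ ENNReal.ofReal (Real.sqrt t * G t ^ 2) *
              ENNReal.ofReal (4 * t ^ (-(1/2) : ℝ)) :=
              mul_le_mul_right (HP_rpow_tail t ht) _
        _ = ENNReal.ofReal (Real.sqrt t * G t ^ 2 * (4 * t ^ (-(1/2) : ℝ))) :=
              (ENNReal.ofReal_mul (mul_nonneg (Real.sqrt_nonneg t) (sq_nonneg _))).symm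
        _ = ENNReal.ofReal (4 * G t ^ 2) := by
              congr 1
              have h1 : Real.sqrt t * t ^ (-(1/2) : ℝ) = 1 := by
                rw [Real.sqrt_eq_rpow, ← Real.rpow_add ht.1]
                norm_num
              calc Real.sqrt t * G t ^ 2 * (4 * t ^ (-(1/2) : ℝ))
                  = Real.sqrt t * t ^ (-(1/2) : ℝ) * (4 * G t ^ 2) := by ring
              _ = 4 * G t ^ 2 := by rw [h1, one_mul]
  _ = 4 * ∫⁻ t in Ioo (0:ℝ) 1, ENNReal.ofReal (G t ^ 2) := by
        simp_rw [ENNReal.ofReal_mul (by norm_num : (0:ℝ) ≤ 4)]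
        rw [lintegral_const_mul' _ _ ENNReal.ofReal_ne_top]
        norm_num

/-- bound for the best Hardy–Poincaré constant
`C_HP ≤ 4 max η / (a(1) d(1) min η)` provided `K_a + K_d ≤ 2`, where
`η(x) = exp ∫_{1/2}^x b/a` and `σ = a/η`. -/
theorem statement3 (a b d : ℝ → ℝ) (Ka Kd : ℝ)
    (hdega : IsDegen a Ka) (hdegd : IsDegen d Kd)
    (hb_cont : ContinuousOn b (Icc 0 1))
    (hba : IntegrableOn (fun x => b x / a x) (Ioo 0 1))
    (hsum : Ka + Kd ≤ 2)
    (η σ : ℝ → ℝ)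
    (hη : ∀ x, η x = Real.exp (∫ s in (1/2:ℝ)..x, b s / a s))
    (hσ : ∀ x, σ x = a x / η x) :
    sInf {C : ℝ | 0 ≤ C ∧ ∀ u u' : ℝ → ℝ,
        (∀ x ∈ Ioo (0:ℝ) 1, HasDerivAt u (u' x) x) →
        ContinuousOn u (Icc 0 1) → u 0 = 0 → u 1 = 0 →
        IntegrableOn (fun x => u x ^ 2 / σ x) (Ioo 0 1) →
        IntegrableOn (fun x => η x * u' x ^ 2) (Ioo 0 1) →
        ∫ x in (0:ℝ)..1, u x ^ 2 / (σ x * d x) ≤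
          C * ∫ x in (0:ℝ)..1, η x * u' x ^ 2}
      ≤ 4 * sSup (η '' Icc 0 1) / (a 1 * d 1 * sInf (η '' Icc 0 1)) := by
  have ha1 : 0 < a 1 := hdega.2.2.1 1 ⟨zero_lt_one, le_rfl⟩
  have hd1 : 0 < d 1 := hdegd.2.2.1 1 ⟨zero_lt_one, le_rfl⟩
  have hηpos : ∀ x, 0 < η x := fun x => by rw [hη]; exact Real.exp_pos _
  have hηeq : η = fun x => Real.exp (∫ s in (1/2:ℝ)..x, b s / a s) := funext hη
  have hbaI : IntervalIntegrable (fun s => b s / a s) volume 0 1 := by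
    rw [intervalIntegrable_iff_integrableOn_Ioc_of_le zero_le_one,
      integrableOn_Ioc_iff_integrableOn_Ioo]
    exact hba
  have hηcont : ContinuousOn η (Icc 0 1) := by
    rw [hηeq]
    apply Real.continuous_exp.comp_continuousOn
    have h12 : (1/2:ℝ) ∈ Set.uIcc (0:ℝ) 1 := by
      rw [Set.uIcc_of_le zero_le_one]; constructor <;> norm_num
    have := intervalIntegral.continuousOn_primitive_interval' hbaI h12
    rwa [Set.uIcc_of_le zero_le_one] at this
  set M := sSup (η '' Icc 0 1) with hMdef
  set m := sInf (η '' Icc 0 1) with hmdef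
  have hcpt := isCompact_Icc.image_of_continuousOn hηcont
  have hne : (η '' Icc 0 1).Nonempty := (nonempty_Icc.mpr zero_le_one).image η
  have hmmem : m ∈ η '' Icc 0 1 := hcpt.sInf_mem hne
  have hm0 : 0 < m := by
    obtain ⟨x, -, hxe⟩ := hmmem
    exact hxe ▸ hηpos x
  have hMle : ∀ x ∈ Icc (0:ℝ) 1, η x ≤ M := fun x hx =>
    le_csSup hcpt.bddAbove ⟨x, hx, rfl⟩
  have hmle : ∀ x ∈ Icc (0:ℝ) 1, m ≤ η x := fun x hx =>
    csInf_le hcpt.bddBelow ⟨x, hx, rfl⟩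
  have hM0 : 0 < M := lt_of_lt_of_le hm0
    ((hmle 1 ⟨zero_le_one, le_rfl⟩).trans (hMle 1 ⟨zero_le_one, le_rfl⟩))
  have had1 : 0 < a 1 * d 1 := mul_pos ha1 hd1
  set C : ℝ := 4 * M / (a 1 * d 1 * m) with hCdef
  have hC0 : 0 ≤ C := le_of_lt (div_pos (by linarith) (mul_pos had1 hm0))
  apply csInf_le ⟨0, fun c hc => hc.1⟩
  refine ⟨hC0, fun u u' hderiv hucont hu0 hu1 hint1 hint2 => ?_⟩
  have hRHSnn : 0 ≤ ∫ x in (0:ℝ)..1, η x * u' x ^ 2 :=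
    intervalIntegral.integral_nonneg zero_le_one
      (fun x _ => mul_nonneg (hηpos x).le (sq_nonneg _))
  by_cases hI : IntegrableOn (fun x => u x ^ 2 / (σ x * d x)) (Ioo 0 1)
  · -- main case
    set G := deriv u with hGdef
    have hGm : Measurable G := measurable_deriv u
    have hu'G : ∀ x ∈ Ioo (0:ℝ) 1, u' x = G x := fun x hx => ((hderiv x hx).deriv).symm
    have hd' : ∀ x ∈ Ioo (0:ℝ) 1, HasDerivAt u (G x) x := fun x hx => by
      rw [← hu'G x hx]; exact hderiv x hx
    have hint2' : IntegrableOn (fun x => η x * G x ^ 2) (Ioo 0 1) :=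
      hint2.congr_fun (fun x hx => by dsimp only; rw [hu'G x hx]) measurableSet_Ioo
    have hηG2nn : ∀ x, 0 ≤ η x * G x ^ 2 := fun x => mul_nonneg (hηpos x).le (sq_nonneg _)
    have hGbd : ∀ t ∈ Ioo (0:ℝ) 1, G t ^ 2 ≤ m⁻¹ * (η t * G t ^ 2) := by
      intro t ht
      have hmt := hmle t ⟨ht.1.le, ht.2.le⟩
      calc G t ^ 2 = m⁻¹ * (m * G t ^ 2) := by field_simp
      _ ≤ m⁻¹ * (η t * G t ^ 2) := by
          apply mul_le_mul_of_nonneg_left _ (inv_nonneg.mpr hm0.le)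
          exact mul_le_mul_of_nonneg_right hmt (sq_nonneg _)
    have hG2 : IntegrableOn (fun t => G t ^ 2) (Ioo 0 1) := by
      refine Integrable.mono' (hint2'.const_mul m⁻¹)
        ((hGm.pow_const 2).aestronglyMeasurable) ?_
      refine (ae_restrict_iff' measurableSet_Ioo).2 (ae_of_all _ fun t ht => ?_)
      rw [Real.norm_eq_abs, abs_of_nonneg (sq_nonneg _)]
      exact hGbd t ht
    set L1 := ∫⁻ x in Ioo (0:ℝ) 1, ENNReal.ofReal (u x ^ 2 / (σ x * d x)) with hL1
    set L2 := ∫⁻ x in Ioo (0:ℝ) 1, ENNReal.ofReal (u x ^ 2 / x ^ 2) with hL2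
    set L3 := ∫⁻ t in Ioo (0:ℝ) 1, ENNReal.ofReal (G t ^ 2) with hL3
    set I := ∫ x in Ioo (0:ℝ) 1, η x * u' x ^ 2 with hIdef
    have hInn : 0 ≤ I := setIntegral_nonneg measurableSet_Ioo
      fun x _ => mul_nonneg (hηpos x).le (sq_nonneg _)
    have hL4 : (∫⁻ x in Ioo (0:ℝ) 1, ENNReal.ofReal (η x * G x ^ 2)) = ENNReal.ofReal I := by
      rw [← ofReal_integral_eq_lintegral_ofReal hint2' (ae_of_all _ fun x => hηG2nn x)]
      congr 1
      rw [hIdef]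
      exact (setIntegral_congr_fun measurableSet_Ioo (fun x hx => by rw [hu'G x hx])).symm
    have hσdpos : ∀ x ∈ Ioo (0:ℝ) 1, 0 < σ x * d x := by
      intro x hx
      have hax : 0 < a x := hdega.2.2.1 x ⟨hx.1, hx.2.le⟩
      have hdx : 0 < d x := hdegd.2.2.1 x ⟨hx.1, hx.2.le⟩
      rw [hσ x]
      exact mul_pos (div_pos hax (hηpos x)) hdx
    have step1 : L1 ≤ ENNReal.ofReal (M / (a 1 * d 1)) * L2 := by
      rw [hL2, ← lintegral_const_mul' _ _ ENNReal.ofReal_ne_top]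
      refine setLIntegral_mono' measurableSet_Ioo fun x hx => ?_
      have hx0 := hx.1
      have hx1 := hx.2
      have hax := HP_degen_lower a Ka hdega x ⟨hx0, hx1.le⟩
      have hdx := HP_degen_lower d Kd hdegd x ⟨hx0, hx1.le⟩
      have hηx := hMle x ⟨hx0.le, hx1.le⟩
      have hapx : 0 < a x := hdega.2.2.1 x ⟨hx0, hx1.le⟩
      have hdpx : 0 < d x := hdegd.2.2.1 x ⟨hx0, hx1.le⟩
      have hKa : 0 < x ^ Ka := Real.rpow_pos_of_pos hx0 _
      have hKd : 0 < x ^ Kd := Real.rpow_pos_of_pos hx0 _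
      have hx2 : (x:ℝ) ^ (2:ℕ) ≤ x ^ Ka * x ^ Kd := by
        rw [← Real.rpow_add hx0]
        calc (x:ℝ) ^ (2:ℕ) = x ^ ((2:ℕ):ℝ) := (Real.rpow_natCast x 2).symm
        _ ≤ x ^ (Ka + Kd) :=
            Real.rpow_le_rpow_of_exponent_ge hx0 hx1.le (by exact_mod_cast hsum)
      have had : a 1 * d 1 * x ^ 2 ≤ a x * d x := by
        calc a 1 * d 1 * x ^ 2 ≤ a 1 * d 1 * (x ^ Ka * x ^ Kd) := by
              apply mul_le_mul_of_nonneg_left _ had1.le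
              exact_mod_cast hx2
        _ = (a 1 * x ^ Ka) * (d 1 * x ^ Kd) := by ring
        _ ≤ a x * d x := by
              apply mul_le_mul hax hdx (by positivity) hapx.le
      have hσd : a 1 * d 1 * x ^ 2 / M ≤ σ x * d x := by
        rw [hσ x, div_mul_eq_mul_div]
        calc a 1 * d 1 * x ^ 2 / M ≤ a x * d x / M :=
              div_le_div_of_nonneg_right had hM0.le
        _ ≤ a x * d x / η x :=
              div_le_div_of_nonneg_left (mul_pos hapx hdpx).le (hηpos x) hηx
      have hb0 : 0 < a 1 * d 1 * x ^ 2 / M := div_pos (mul_pos had1 (pow_pos hx0 2)) hM0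
      have hpt : u x ^ 2 / (σ x * d x) ≤ M / (a 1 * d 1) * (u x ^ 2 / x ^ 2) := by
        calc u x ^ 2 / (σ x * d x) ≤ u x ^ 2 / (a 1 * d 1 * x ^ 2 / M) :=
              div_le_div_of_nonneg_left (sq_nonneg _) hb0 hσd
        _ = M / (a 1 * d 1) * (u x ^ 2 / x ^ 2) := by
              field_simp
      calc ENNReal.ofReal (u x ^ 2 / (σ x * d x))
          ≤ ENNReal.ofReal (M / (a 1 * d 1) * (u x ^ 2 / x ^ 2)) :=
            ENNReal.ofReal_le_ofReal hpt
      _ = ENNReal.ofReal (M / (a 1 * d 1)) * ENNReal.ofReal (u x ^ 2 / x ^ 2) :=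
            ENNReal.ofReal_mul (div_nonneg hM0.le had1.le)
    have step2 : L2 ≤ 4 * L3 := HP_hardy_lintegral u G hGm hucont hu0 hd' hG2
    have step3 : L3 ≤ ENNReal.ofReal m⁻¹ * ENNReal.ofReal I := by
      rw [← hL4, ← lintegral_const_mul' _ _ ENNReal.ofReal_ne_top]
      refine setLIntegral_mono' measurableSet_Ioo fun t ht => ?_
      rw [← ENNReal.ofReal_mul (inv_nonneg.mpr hm0.le)]
      exact ENNReal.ofReal_le_ofReal (hGbd t ht)
    have chain : L1 ≤ ENNReal.ofReal (C * I) := by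
      calc L1 ≤ ENNReal.ofReal (M / (a 1 * d 1)) * L2 := step1
      _ ≤ ENNReal.ofReal (M / (a 1 * d 1)) * (4 * L3) := mul_le_mul_right step2 _
      _ ≤ ENNReal.ofReal (M / (a 1 * d 1)) *
            (4 * (ENNReal.ofReal m⁻¹ * ENNReal.ofReal I)) :=
            mul_le_mul_right (mul_le_mul_right step3 _) _
      _ = ENNReal.ofReal (C * I) := by
            rw [show (4:ℝ≥0∞) = ENNReal.ofReal (4:ℝ) by
              rw [ENNReal.ofReal_ofNat]]
            rw [← ENNReal.ofReal_mul (inv_nonneg.mpr hm0.le),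
              ← ENNReal.ofReal_mul (by positivity),
              ← ENNReal.ofReal_mul (div_nonneg hM0.le had1.le)]
            congr 1
            rw [hCdef]
            field_simp
    have hLHS : ∫ x in (0:ℝ)..1, u x ^ 2 / (σ x * d x) = L1.toReal := by
      rw [intervalIntegral.integral_of_le zero_le_one, integral_Ioc_eq_integral_Ioo,
        integral_eq_lintegral_of_nonneg_ae
          ((ae_restrict_iff' measurableSet_Ioo).2 (ae_of_all _ fun x hx =>
            div_nonneg (sq_nonneg _) (hσdpos x hx).le))
          hI.aestronglyMeasurable]
    have hRHS : ∫ x in (0:ℝ)..1, η x * u' x ^ 2 = I := by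
      rw [intervalIntegral.integral_of_le zero_le_one, integral_Ioc_eq_integral_Ioo]
    rw [hLHS, hRHS]
    exact ENNReal.toReal_le_of_le_ofReal (mul_nonneg hC0 hInn) chain
  · rw [intervalIntegral.integral_undef]
    · exact mul_nonneg hC0 hRHSnn
    · intro hcontra
      apply hI
      rw [intervalIntegrable_iff_integrableOn_Ioc_of_le zero_le_one,
        integrableOn_Ioc_iff_integrableOn_Ioo] at hcontra
      exact hcontra
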